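/- Order-lifting of controllers: let ℓ ≥ m ≥ 1 and suppose c̄ internally stabilises s^{-ℓ}. Define c(s) = s^{-ℓ+m}·c̄(s). Then c internally stabilises s^{-m}, and moreover s^{-m}c/(1 + s^{-m}c) = s^{-ℓ}c̄/(1 + s^{-ℓ}c̄) as rational functions, so the closed-loop complementary sensitivity is unchanged. -/

import Mathlib

set_option synthInstance.maxHeartbeats 400000

noncomputable def s14 : RatFunc ℝ := RatFunc.X

/-- `f ∈ RH∞`: proper, and no poles in the closed right half-plane. -/
def Stable14 (f : RatFunc ℝ) : Prop :=
  f.num.degree ≤ f.denom.degree ∧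
    ∀ z : ℂ, 0 ≤ z.re → Polynomial.eval z (f.denom.map (algebraMap ℝ ℂ)) ≠ 0

/-- `c` internally stabilises `p`. -/
def Stabilises14 (p c : RatFunc ℝ) : Prop :=
  1 + p * c ≠ 0 ∧ Stable14 (1 / (1 + p * c)) ∧ Stable14 (p / (1 + p * c)) ∧
    Stable14 (c / (1 + p * c)) ∧ Stable14 (p * c / (1 + p * c))

lemma deg_iff14 {g : RatFunc ℝ} (h : g ≠ 0) :
    g.num.degree ≤ g.denom.degree ↔ g.intDegree ≤ 0 := by
  rw [Polynomial.degree_eq_natDegree (RatFunc.num_ne_zero h),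
    Polynomial.degree_eq_natDegree g.denom_ne_zero, RatFunc.intDegree, sub_nonpos,
    Nat.cast_le, Int.ofNat_le]

lemma s14_pow_ne_zero (n : ℕ) : s14 ^ n ≠ 0 :=
  pow_ne_zero n RatFunc.X_ne_zero

lemma intDegree_s14_pow (n : ℕ) : (s14 ^ n).intDegree = n := by
  rw [s14, ← RatFunc.algebraMap_X, ← map_pow, RatFunc.intDegree_polynomial,
    Polynomial.natDegree_X_pow]

/-- If `f` and `s^k f` are stable then so is `s^j f` for `j ≤ k`. -/
lemma stable_mul_pow {f : RatFunc ℝ} {j k : ℕ} (hjk : j ≤ k)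
    (hf : Stable14 f) (hk : Stable14 (s14 ^ k * f)) : Stable14 (s14 ^ j * f) := by
  by_cases hf0 : f = 0
  · subst hf0; simpa using hk
  have hj0 : s14 ^ j * f ≠ 0 := mul_ne_zero (s14_pow_ne_zero j) hf0
  have hk0 : s14 ^ k * f ≠ 0 := mul_ne_zero (s14_pow_ne_zero k) hf0
  constructor
  · rw [deg_iff14 hj0, RatFunc.intDegree_mul (s14_pow_ne_zero j) hf0, intDegree_s14_pow]
    have := (deg_iff14 hk0).mp hk.1
    rw [RatFunc.intDegree_mul (s14_pow_ne_zero k) hf0, intDegree_s14_pow] at this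
    have : (j : ℤ) + f.intDegree ≤ (k : ℤ) + f.intDegree := by
      exact_mod_cast Int.add_le_add_right (Int.ofNat_le.mpr hjk) f.intDegree
    linarith [(deg_iff14 hk0).mp hk.1, this]
  · have hrep : s14 ^ j * f =
        algebraMap (Polynomial ℝ) (RatFunc ℝ) (Polynomial.X ^ j * f.num) /
          algebraMap (Polynomial ℝ) (RatFunc ℝ) f.denom := by
      rw [map_mul, map_pow, RatFunc.algebraMap_X, mul_div_assoc, RatFunc.num_div_denom, s14]
    have hdvd : (s14 ^ j * f).denom ∣ f.denom :=
      (RatFunc.denom_dvd f.denom_ne_zero).mpr ⟨Polynomial.X ^ j * f.num, hrep⟩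
    intro z hz hzero
    exact hf.2 z hz (eq_zero_of_zero_dvd
      (hzero ▸ Polynomial.eval_dvd (Polynomial.map_dvd (algebraMap ℝ ℂ) hdvd)))

theorem order_lifting (ℓ m : ℕ) (hm : 1 ≤ m) (hml : m ≤ ℓ) (cbar : RatFunc ℝ)
    (hstab : Stabilises14 ((s14 ^ ℓ)⁻¹) cbar) :
    Stabilises14 ((s14 ^ m)⁻¹) ((s14 ^ (ℓ - m))⁻¹ * cbar) ∧
    (s14 ^ m)⁻¹ * ((s14 ^ (ℓ - m))⁻¹ * cbar) /
        (1 + (s14 ^ m)⁻¹ * ((s14 ^ (ℓ - m))⁻¹ * cbar))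
      = (s14 ^ ℓ)⁻¹ * cbar / (1 + (s14 ^ ℓ)⁻¹ * cbar) := by
  obtain ⟨hD, h1, h2, h3, h4⟩ := hstab
  have key : (s14 ^ m)⁻¹ * ((s14 ^ (ℓ - m))⁻¹ * cbar) = (s14 ^ ℓ)⁻¹ * cbar := by
    rw [← mul_assoc, ← mul_inv, ← pow_add, Nat.add_sub_cancel' hml]
  have hsplit : s14 ^ ℓ = s14 ^ (ℓ - m) * s14 ^ m := by
    rw [← pow_add, Nat.sub_add_cancel hml]
  have e1 : s14 ^ (ℓ - m) * (s14 ^ ℓ)⁻¹ = (s14 ^ m)⁻¹ := by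
    rw [hsplit, mul_inv, ← mul_assoc, mul_inv_cancel₀ (s14_pow_ne_zero (ℓ - m)), one_mul]
  have e2 : s14 ^ m * (s14 ^ ℓ)⁻¹ = (s14 ^ (ℓ - m))⁻¹ := by
    rw [hsplit, mul_inv, mul_comm (s14 ^ (ℓ - m))⁻¹, ← mul_assoc,
      mul_inv_cancel₀ (s14_pow_ne_zero m), one_mul]
  refine ⟨⟨?_, ?_, ?_, ?_, ?_⟩, ?_⟩
  · rw [key]; exact hD
  · rw [key]; exact h1
  · rw [key]
    have : (s14 ^ m)⁻¹ / (1 + (s14 ^ ℓ)⁻¹ * cbar)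
        = s14 ^ (ℓ - m) * ((s14 ^ ℓ)⁻¹ / (1 + (s14 ^ ℓ)⁻¹ * cbar)) := by
      rw [← mul_div_assoc, e1]
    rw [this]
    refine stable_mul_pow (Nat.sub_le ℓ m) h2 ?_
    have : s14 ^ ℓ * ((s14 ^ ℓ)⁻¹ / (1 + (s14 ^ ℓ)⁻¹ * cbar))
        = 1 / (1 + (s14 ^ ℓ)⁻¹ * cbar) := by
      rw [← mul_div_assoc, mul_inv_cancel₀ (s14_pow_ne_zero ℓ)]
    rw [this]; exact h1
  · rw [key]
    have : (s14 ^ (ℓ - m))⁻¹ * cbar / (1 + (s14 ^ ℓ)⁻¹ * cbar)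
        = s14 ^ m * ((s14 ^ ℓ)⁻¹ * cbar / (1 + (s14 ^ ℓ)⁻¹ * cbar)) := by
      rw [← mul_div_assoc, ← mul_assoc, e2]
    rw [this]
    refine stable_mul_pow hml h4 ?_
    have : s14 ^ ℓ * ((s14 ^ ℓ)⁻¹ * cbar / (1 + (s14 ^ ℓ)⁻¹ * cbar))
        = cbar / (1 + (s14 ^ ℓ)⁻¹ * cbar) := by
      rw [← mul_div_assoc, ← mul_assoc, mul_inv_cancel₀ (s14_pow_ne_zero ℓ), one_mul]
    rw [this]; exact h3
  · rw [key]; exact h4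
  · rw [key]
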